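/- Let N_n := Σ_{j=0}^{n−1} (−1)^{(n−1)j} τ_n^j as an operator on C^{⊗n}. Then for every n ≥ 1 one has N_{n+1} ∘ d^{CB}_n = d^{CH}_n ∘ N_n as linear maps C^{⊗n} → C^{⊗(n+1)}. -/

import Mathlib

open TensorProduct PiTensorProduct

noncomputable section

variable (k : Type) [Field k] (C : Type) [AddCommGroup C] [Module k C]

abbrev tpow (n : ℕ) : Type := ⨂[k] (_ : Fin n), C

variable {k C}

def tcast {m n : ℕ} (h : m = n) : tpow k C m ≃ₗ[k] tpow k C n :=
  PiTensorProduct.reindex k (fun _ => C) (finCongr h)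

def mulE (m n : ℕ) : (tpow k C m ⊗[k] tpow k C n) ≃ₗ[k] tpow k C (m + n) :=
  (PiTensorProduct.tmulEquiv k C).trans
    (PiTensorProduct.reindex k (fun _ => C) finSumFinEquiv)

def eC : C ≃ₗ[k] tpow k C 1 :=
  (PiTensorProduct.subsingletonEquiv (R := k) (s := fun _ : Fin 1 => C) (0 : Fin 1)).symm

def permAct {n : ℕ} (σ : Equiv.Perm (Fin n)) : tpow k C n ≃ₗ[k] tpow k C n :=
  PiTensorProduct.reindex k (fun _ => C) σ

def tauPow (n : ℕ) (j : ℤ) : tpow k C n ≃ₗ[k] tpow k C n :=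
  permAct ((finRotate n) ^ j)

def eps (n : ℕ) : tpow k C n →ₗ[k] tpow k C n :=
  ∑ σ : Equiv.Perm (Fin n),
    ((Equiv.Perm.sign σ : ℤ) : k) • (permAct σ).toLinearMap

variable (D : C →ₗ[k] C ⊗[k] C)

/-- Apply `D : C → C ⊗ C` to the factor in position `a` (0-indexed) of `C^{⊗(a+1+b)}`,
leaving the two outputs in positions `a`, `a+1`. -/
def insertAt (a b : ℕ) : tpow k C (a + 1 + b) →ₗ[k] tpow k C (a + 1 + b + 1) :=
  (tcast (show a + 1 + (1 + b) = a + 1 + b + 1 by omega)).toLinearMap ∘ₗ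
  (mulE (a + 1) (1 + b)).toLinearMap ∘ₗ
  (TensorProduct.map (mulE a 1).toLinearMap (mulE 1 b).toLinearMap) ∘ₗ
  (TensorProduct.map (TensorProduct.map LinearMap.id eC.toLinearMap)
      (TensorProduct.map eC.toLinearMap LinearMap.id)) ∘ₗ
  (TensorProduct.assoc k (tpow k C a ⊗[k] C) C (tpow k C b)).toLinearMap ∘ₗ
  (TensorProduct.map (TensorProduct.assoc k (tpow k C a) C C).symm.toLinearMap LinearMap.id) ∘ₗ
  (TensorProduct.map (TensorProduct.map LinearMap.id D) LinearMap.id) ∘ₗ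
  (TensorProduct.map (TensorProduct.map LinearMap.id eC.symm.toLinearMap) LinearMap.id) ∘ₗ
  (TensorProduct.map (mulE a 1).symm.toLinearMap LinearMap.id) ∘ₗ
  (mulE (a + 1) b).symm.toLinearMap

/-- `∂_j = id^{⊗j} ⊗ D ⊗ id^{⊗(n-1-j)} : C^{⊗n} → C^{⊗(n+1)}`. -/
def del {n : ℕ} (j : Fin n) : tpow k C n →ₗ[k] tpow k C (n + 1) :=
  (tcast (show (j : ℕ) + 1 + (n - 1 - (j : ℕ)) + 1 = n + 1 by
      have := j.isLt; omega)).toLinearMap ∘ₗ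
  insertAt D (j : ℕ) (n - 1 - (j : ℕ)) ∘ₗ
  (tcast (show n = (j : ℕ) + 1 + (n - 1 - (j : ℕ)) by
      have := j.isLt; omega)).toLinearMap

/-- The bar differential `d^{CB}_n = Σ_{j=0}^{n-1} (-1)^j ∂_j`. -/
def dCB (n : ℕ) : tpow k C n →ₗ[k] tpow k C (n + 1) :=
  ∑ j : Fin n, ((-1 : k) ^ (j : ℕ)) • del D j

/-- `∂_0`, defined as `0` when `n = 0`. -/
def del0 (n : ℕ) : tpow k C n →ₗ[k] tpow k C (n + 1) :=
  if h : 0 < n then del D (⟨0, h⟩ : Fin n) else 0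

/-- The Hochschild differential `d^{CH}_n = d^{CB}_n + (-1)^n τ_{n+1}⁻¹ ∘ ∂_0`. -/
def dCH (n : ℕ) : tpow k C n →ₗ[k] tpow k C (n + 1) :=
  dCB D n + ((-1 : k) ^ n) • ((tauPow (n + 1) (-1)).toLinearMap ∘ₗ del0 D n)

/-- Apply `D` at position `a` of `C^{⊗(a+1+b)}` and move the second output leg to the very end,
yielding a map `C^{⊗(a+1+b)} → C^{⊗(a+1+b)} ⊗ C`. -/
def coactAt (a b : ℕ) : tpow k C (a + 1 + b) →ₗ[k] tpow k C (a + 1 + b) ⊗[k] C :=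
  (TensorProduct.map (mulE (a + 1) b).toLinearMap LinearMap.id) ∘ₗ
  (TensorProduct.map (TensorProduct.map (mulE a 1).toLinearMap LinearMap.id) LinearMap.id) ∘ₗ
  (TensorProduct.map (TensorProduct.map (TensorProduct.map LinearMap.id eC.toLinearMap)
      LinearMap.id) LinearMap.id) ∘ₗ
  (TensorProduct.assoc k (tpow k C a ⊗[k] C) (tpow k C b) C).symm.toLinearMap ∘ₗ
  (TensorProduct.map LinearMap.id (TensorProduct.comm k C (tpow k C b)).toLinearMap) ∘ₗ
  (TensorProduct.assoc k (tpow k C a ⊗[k] C) C (tpow k C b)).toLinearMap ∘ₗ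
  (TensorProduct.map (TensorProduct.assoc k (tpow k C a) C C).symm.toLinearMap LinearMap.id) ∘ₗ
  (TensorProduct.map (TensorProduct.map LinearMap.id D) LinearMap.id) ∘ₗ
  (TensorProduct.map (TensorProduct.map LinearMap.id eC.symm.toLinearMap) LinearMap.id) ∘ₗ
  (TensorProduct.map (mulE a 1).symm.toLinearMap LinearMap.id) ∘ₗ
  (mulE (a + 1) b).symm.toLinearMap

/-- The diagonal coaction `ρ_n : C^{⊗n} → C^{⊗n} ⊗ C`,
`ρ_n(x¹⊗⋯⊗xⁿ) = Σ_j (x¹⊗⋯⊗(x^j)_{[1]}⊗⋯⊗xⁿ) ⊗ (x^j)_{[2]}` where `D x = x_{[1]} ⊗ x_{[2]}`. -/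
def coact (n : ℕ) : tpow k C n →ₗ[k] tpow k C n ⊗[k] C :=
  ∑ j : Fin n,
    (TensorProduct.map
      (tcast (show (j : ℕ) + 1 + (n - 1 - (j : ℕ)) = n by have := j.isLt; omega)).toLinearMap
      LinearMap.id) ∘ₗ
    coactAt D (j : ℕ) (n - 1 - (j : ℕ)) ∘ₗ
    (tcast (show n = (j : ℕ) + 1 + (n - 1 - (j : ℕ)) by have := j.isLt; omega)).toLinearMap

/-- The diagonal coaction with codomain `C^{⊗(n+1)}`. -/
def coactE (n : ℕ) : tpow k C n →ₗ[k] tpow k C (n + 1) :=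
  (mulE n 1).toLinearMap ∘ₗ (TensorProduct.map LinearMap.id eC.toLinearMap) ∘ₗ coact D n

/-- The Chevalley–Eilenberg summand `∂_j = ρ_{j+1} ⊗ id^{⊗(n-j-1)}` for `j : Fin n`. -/
def CEdel {n : ℕ} (j : Fin n) : tpow k C n →ₗ[k] tpow k C (n + 1) :=
  (tcast (show (j : ℕ) + 1 + 1 + (n - ((j : ℕ) + 1)) = n + 1 by
      have := j.isLt; omega)).toLinearMap ∘ₗ
  (mulE ((j : ℕ) + 1 + 1) (n - ((j : ℕ) + 1))).toLinearMap ∘ₗ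
  (TensorProduct.map (coactE D ((j : ℕ) + 1)) LinearMap.id) ∘ₗ
  (mulE ((j : ℕ) + 1) (n - ((j : ℕ) + 1))).symm.toLinearMap ∘ₗ
  (tcast (show n = (j : ℕ) + 1 + (n - ((j : ℕ) + 1)) by have := j.isLt; omega)).toLinearMap

/-- The Chevalley–Eilenberg–Leibniz differential
`d^{CE}_n = Σ_{j=1}^n (-1)^{j-1} (ρ_j ⊗ id^{⊗(n-j)})`. -/
def dCE (n : ℕ) : tpow k C n →ₗ[k] tpow k C (n + 1) :=
  ∑ j : Fin n, ((-1 : k) ^ (j : ℕ)) • CEdel D j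

/-- Extend `f : C^{⊗n} → C^{⊗m}` to `f ⊗ id : C^{⊗(n+1)} → C^{⊗(m+1)}`
acting on the first factors. -/
def extLast {n m : ℕ} (f : tpow k C n →ₗ[k] tpow k C m) :
    tpow k C (n + 1) →ₗ[k] tpow k C (m + 1) :=
  (mulE m 1).toLinearMap ∘ₗ (TensorProduct.map f LinearMap.id) ∘ₗ (mulE n 1).symm.toLinearMap

/-- Apply `f` to the `m` middle factors (positions `p+1,…,p+m`) of `C^{⊗(p+m+r)}`. -/
def midOp (p m r : ℕ) (f : tpow k C m →ₗ[k] tpow k C m) :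
    tpow k C (p + m + r) →ₗ[k] tpow k C (p + m + r) :=
  (mulE (p + m) r).toLinearMap ∘ₗ
  (TensorProduct.map
    ((mulE p m).toLinearMap ∘ₗ (TensorProduct.map LinearMap.id f) ∘ₗ
      (mulE p m).symm.toLinearMap)
    LinearMap.id) ∘ₗ
  (mulE (p + m) r).symm.toLinearMap

/-- `ε_n ⊗ id : C^{⊗(n+1)} → C^{⊗(n+1)}`, antisymmetrizing the first `n` factors. -/
def epsHead (n : ℕ) : tpow k C (n + 1) →ₗ[k] tpow k C (n + 1) :=
  ∑ σ : Equiv.Perm (Fin n),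
    ((Equiv.Perm.sign σ : ℤ) : k) •
      (permAct (finSumFinEquiv.permCongr (Equiv.sumCongr σ (Equiv.refl (Fin 1))))).toLinearMap

/-- `id ⊗ ε_m : C^{⊗(m+1)} → C^{⊗(m+1)}`, antisymmetrizing the last `m` factors. -/
def epsTail (m : ℕ) : tpow k C (m + 1) →ₗ[k] tpow k C (m + 1) :=
  ∑ σ : Equiv.Perm (Fin m),
    ((Equiv.Perm.sign σ : ℤ) : k) •
      (permAct ((finCongr (show 1 + m = m + 1 by omega)).permCongr
        (finSumFinEquiv.permCongr (Equiv.sumCongr (Equiv.refl (Fin 1)) σ)))).toLinearMap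

/-- The permutation of `Fin (n+1)` which moves the factor in position `j` to the end,
shifting the later ones down (as a reindexing function, it is the cycle rotating
positions `j,…,n`). -/
def moveEndPerm (n : ℕ) (j : Fin (n + 1)) : Equiv.Perm (Fin (n + 1)) :=
  (finCongr (show (j : ℕ) + (n + 1 - (j : ℕ)) = n + 1 by have := j.isLt; omega)).permCongr
    (finSumFinEquiv.permCongr
      (Equiv.sumCongr (Equiv.refl (Fin (j : ℕ))) (finRotate (n + 1 - (j : ℕ)))))

/-- The contracting homotopy `h_{n+1} : C^{⊗(n+1)} → C^{⊗n} ⊗ C`,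
`h(x¹⊗⋯⊗x^{n+1}) = Σ_j (-1)^j (x¹⊗⋯⊗\hat{x^j}⊗⋯⊗x^{n+1}) ⊗ x^j`. -/
def hBar (n : ℕ) : tpow k C (n + 1) →ₗ[k] tpow k C n ⊗[k] C :=
  ∑ j : Fin (n + 1), ((-1 : k) ^ ((j : ℕ) + 1)) •
    ((TensorProduct.map LinearMap.id eC.symm.toLinearMap) ∘ₗ
      (mulE n 1).symm.toLinearMap ∘ₗ (permAct (moveEndPerm n j)⁻¹).toLinearMap)

/-- The contracting homotopy as an operator on `C^{⊗(n+1)}`. -/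
def hOp (n : ℕ) : tpow k C (n + 1) →ₗ[k] tpow k C (n + 1) :=
  ∑ j : Fin (n + 1), ((-1 : k) ^ ((j : ℕ) + 1)) • (permAct (moveEndPerm n j)⁻¹).toLinearMap

/-- The norm operator `N_n = Σ_{j=0}^{n-1} (-1)^{(n-1)j} τ_n^j`. -/
def Nop (n : ℕ) : tpow k C n →ₗ[k] tpow k C n :=
  ∑ j : Fin n, ((-1 : k) ^ ((n - 1) * (j : ℕ))) • (tauPow n (j : ℕ)).toLinearMap

/-- `t_n = id - (-1)^{n-1} τ_n⁻¹`. -/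
def tOp (n : ℕ) : tpow k C n →ₗ[k] tpow k C n :=
  LinearMap.id - ((-1 : k) ^ (n - 1)) • (tauPow n (-1)).toLinearMap


/-- `i_n = (-1)^{n+1} · id`. -/
def iCE (n : ℕ) : tpow k C n →ₗ[k] tpow k C n :=
  ((-1 : k) ^ (n + 1)) • LinearMap.id

end

/-- The cobracket `δ = (id - τ) ∘ Δ` of the Lie coalgebra `Lie(C)`. -/
noncomputable def lieD {k : Type} [Field k] {C : Type} [AddCommGroup C] [Module k C]
    (Δ : C →ₗ[k] C ⊗[k] C) : C →ₗ[k] C ⊗[k] C :=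
  (LinearMap.id - (TensorProduct.comm k C C).toLinearMap) ∘ₗ Δ

noncomputable section
variable {k : Type} [Field k] {C : Type} [AddCommGroup C] [Module k C]

lemma permAct_tprod {n : ℕ} (σ : Equiv.Perm (Fin n)) (x : Fin n → C) :
    permAct (k := k) σ (tprod k x) = tprod k (fun i => x (σ.symm i)) :=
  PiTensorProduct.reindex_tprod σ x

lemma tcast_tprod {m n : ℕ} (h : m = n) (x : Fin m → C) :
    tcast (k := k) h (tprod k x) = tprod k (fun i => x (Fin.cast h.symm i)) := by
  refine (PiTensorProduct.reindex_tprod _ x).trans ?_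
  rfl

lemma mulE_tprod (m n : ℕ) (x : Fin m → C) (y : Fin n → C) :
    mulE (k := k) m n (tprod k x ⊗ₜ[k] tprod k y) = tprod k (Fin.append x y) := by
  dsimp [mulE]
  rw [PiTensorProduct.tmulEquiv_apply k C x y]
  refine (PiTensorProduct.reindex_tprod _ _).trans ?_
  congr 1
  dsimp only [Fin.append, finSumFinEquiv, Equiv.coe_fn_symm_mk]
  apply funext
  apply Fin.addCases <;> simp

lemma eC_apply (c : C) : eC (k := k) c = tprod k (fun _ : Fin 1 => c) := by
  apply (PiTensorProduct.subsingletonEquiv (0 : Fin 1)).injective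
  simp [eC]

lemma eC_symm_tprod (x : Fin 1 → C) : (eC (k := k)).symm (tprod k x) = x 0 := by
  simp [eC]

lemma mulE_symm_tprod (m n : ℕ) (z : Fin (m + n) → C) :
    (mulE (k := k) m n).symm (tprod k z)
      = tprod k (fun i : Fin m => z (Fin.castAdd n i)) ⊗ₜ[k]
          tprod k (fun i : Fin n => z (Fin.natAdd m i)) := by
  rw [LinearEquiv.symm_apply_eq, mulE_tprod]
  congr 1
  apply funext
  apply Fin.addCases <;> simp

end
noncomputable section
open Fin.NatCast Fin.CommRing
variable {k : Type} [Field k] {C : Type} [AddCommGroup C] [Module k C]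

lemma finRotate_pow_apply (n m : ℕ) (i : Fin (n + 1)) :
    ((finRotate (n + 1)) ^ m) i = i + (m : Fin (n + 1)) := by
  induction m with
  | zero => simp
  | succ m ih =>
      rw [pow_succ', Equiv.Perm.mul_apply, ih, finRotate_succ_apply]
      push_cast
      ring

lemma finRotate_pow_self (n : ℕ) : (finRotate n) ^ n = 1 := by
  cases n with
  | zero => exact Subsingleton.elim _ _
  | succ n =>
      ext i
      rw [finRotate_pow_apply]
      simp [Fin.ext_iff, Fin.add_def]

lemma finRotate_zpow_congr {n : ℕ} {a b : ℤ} (h : (n : ℤ) ∣ (a - b)) :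
    (finRotate n) ^ a = (finRotate n) ^ b := by
  obtain ⟨q, hq⟩ := h
  have : a = b + n * q := by linarith
  rw [this, zpow_add, zpow_mul, zpow_natCast, finRotate_pow_self, one_zpow, mul_one]

lemma permAct_comp {n : ℕ} (σ ρ : Equiv.Perm (Fin n)) :
    (permAct (k := k) (C := C) σ).toLinearMap ∘ₗ (permAct ρ).toLinearMap
      = (permAct (σ * ρ)).toLinearMap := by
  apply PiTensorProduct.ext
  apply MultilinearMap.ext
  intro x
  simp only [LinearMap.compMultilinearMap_apply, LinearMap.comp_apply,
    LinearEquiv.coe_coe, permAct_tprod]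
  congr 1

lemma tauPow_comp (n : ℕ) (a b : ℤ) :
    (tauPow (k := k) (C := C) n a).toLinearMap ∘ₗ (tauPow n b).toLinearMap
      = (tauPow n (a + b)).toLinearMap := by
  rw [tauPow, tauPow, tauPow, permAct_comp, ← zpow_add]

lemma tauPow_congr {n : ℕ} {a b : ℤ} (h : (n : ℤ) ∣ (a - b)) :
    (tauPow (k := k) (C := C) n a) = tauPow n b := by
  rw [tauPow, tauPow, finRotate_zpow_congr h]

lemma tauPow_zero (n : ℕ) : (tauPow (k := k) (C := C) n 0).toLinearMap = LinearMap.id := by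
  rw [tauPow, zpow_zero]
  apply PiTensorProduct.ext
  apply MultilinearMap.ext
  intro x
  simp only [LinearMap.compMultilinearMap_apply, LinearMap.comp_apply,
    LinearEquiv.coe_coe, permAct_tprod, LinearMap.id_apply]
  rfl

lemma finRotate_pow_inv_apply (n m : ℕ) (i : Fin (n + 1)) :
    ((finRotate (n + 1)) ^ m)⁻¹ i = i - (m : Fin (n + 1)) := by
  rw [Equiv.Perm.inv_def, Equiv.symm_apply_eq, finRotate_pow_apply, sub_add_cancel]

lemma tauPow_tprod (n m : ℕ) (x : Fin (n + 1) → C) :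
    (tauPow (k := k) (n + 1) (m : ℤ)) (tprod k x)
      = tprod k (fun i => x (i - (m : Fin (n + 1)))) := by
  rw [tauPow, zpow_natCast, permAct_tprod]
  congr 1
  funext i
  rw [← Equiv.Perm.inv_def, finRotate_pow_inv_apply]

lemma tauPow_neg_one_tprod (n : ℕ) (x : Fin (n + 1) → C) :
    (tauPow (k := k) (n + 1) (-1)) (tprod k x)
      = tprod k (fun i => x (i + 1)) := by
  rw [tauPow, permAct_tprod]
  congr 1
  funext i
  rw [zpow_neg_one, ← Equiv.Perm.inv_def]
  simp

end
noncomputable section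
open Fin.NatCast Fin.CommRing
variable {k : Type} [Field k] {C : Type} [AddCommGroup C] [Module k C]

lemma append_val_eval {α : Type*} {m n : ℕ} (p : Fin m → α) (q : Fin n → α) (i : Fin (m + n)) :
    Fin.append p q i = if h : (i : ℕ) < m then p ⟨i, h⟩
      else q ⟨(i : ℕ) - m, by have := i.isLt; omega⟩ := by
  split_ifs with h
  · conv_lhs => rw [show i = Fin.castAdd n ⟨i, h⟩ from Fin.ext rfl]
    exact Fin.append_left p q _
  · conv_lhs => rw [show i = Fin.natAdd m ⟨(i : ℕ) - m, by have := i.isLt; omega⟩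
      from Fin.ext (by simp; omega)]
    exact Fin.append_right p q _

variable (D : C →ₗ[k] C ⊗[k] C)

def sandwich (a b : ℕ) (f : Fin a → C) (g : Fin b → C) :
    C ⊗[k] C →ₗ[k] tpow k C (a + 1 + b + 1) :=
  (tcast (show a + 1 + (1 + b) = a + 1 + b + 1 by omega)).toLinearMap ∘ₗ
  (mulE (a + 1) (1 + b)).toLinearMap ∘ₗ
  (TensorProduct.map (mulE a 1).toLinearMap (mulE 1 b).toLinearMap) ∘ₗ
  (TensorProduct.map (TensorProduct.map LinearMap.id eC.toLinearMap)
      (TensorProduct.map eC.toLinearMap LinearMap.id)) ∘ₗ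
  (TensorProduct.assoc k (tpow k C a ⊗[k] C) C (tpow k C b)).toLinearMap ∘ₗ
  (TensorProduct.map (TensorProduct.assoc k (tpow k C a) C C).symm.toLinearMap LinearMap.id) ∘ₗ
  ((TensorProduct.mk k (tpow k C a ⊗[k] (C ⊗[k] C)) (tpow k C b)).flip (tprod k g)) ∘ₗ
  (TensorProduct.mk k (tpow k C a) (C ⊗[k] C) (tprod k f))

lemma insertAt_tprod (a b : ℕ) (x : Fin (a + 1 + b) → C) :
    insertAt D a b (tprod k x)
      = sandwich a b (fun i : Fin a => x ⟨i, by omega⟩)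
          (fun i : Fin b => x ⟨a + 1 + i, by omega⟩) (D (x ⟨a, by omega⟩)) := by
  rw [insertAt, sandwich]
  simp only [LinearMap.comp_apply, LinearEquiv.coe_coe]
  rw [mulE_symm_tprod]
  simp only [TensorProduct.map_tmul, LinearEquiv.coe_coe, LinearMap.id_coe, id_eq]
  rw [mulE_symm_tprod]
  simp only [TensorProduct.map_tmul, LinearEquiv.coe_coe, LinearMap.id_coe, id_eq]
  rw [eC_symm_tprod]
  simp only [TensorProduct.mk_apply, LinearMap.flip_apply]
  congr 1

lemma sandwich_tmul (a b : ℕ) (f : Fin a → C) (g : Fin b → C) (u v : C) :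
    sandwich (k := k) a b f g (u ⊗ₜ[k] v)
      = tprod k (fun i : Fin (a + 1 + b + 1) =>
          if h1 : (i : ℕ) < a then f ⟨i, h1⟩
          else if h2 : (i : ℕ) = a then u
          else if h3 : (i : ℕ) = a + 1 then v
          else g ⟨(i : ℕ) - (a + 2), by have := i.isLt; omega⟩) := by
  rw [sandwich]
  simp only [LinearMap.comp_apply, TensorProduct.mk_apply, LinearMap.flip_apply,
    LinearEquiv.coe_coe, TensorProduct.map_tmul, TensorProduct.assoc_symm_tmul,
    TensorProduct.assoc_tmul, LinearMap.id_coe, id_eq]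
  rw [eC_apply, eC_apply, mulE_tprod, mulE_tprod, mulE_tprod, tcast_tprod]
  congr 1
  funext i
  simp only [append_val_eval, Fin.coe_cast]
  split_ifs <;> first | rfl | omega
noncomputable section
variable {k : Type} [Field k] {C : Type} [AddCommGroup C] [Module k C] (D : C →ₗ[k] C ⊗[k] C)
def spliceFun {n : ℕ} (j : Fin n) (x : Fin n → C) (u v : C) : Fin (n + 1) → C :=
  fun i => if h1 : (i : ℕ) < (j : ℕ) then x ⟨i, by have := j.isLt; omega⟩
    else if h2 : (i : ℕ) = (j : ℕ) then u
    else if h3 : (i : ℕ) = (j : ℕ) + 1 then v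
    else x ⟨(i : ℕ) - 1, by have := i.isLt; omega⟩

def spliceMap {n : ℕ} (j : Fin n) (x : Fin n → C) : C ⊗[k] C →ₗ[k] tpow k C (n + 1) :=
  (tcast (show (j : ℕ) + 1 + (n - 1 - (j : ℕ)) + 1 = n + 1 by have := j.isLt; omega)).toLinearMap
    ∘ₗ sandwich (j : ℕ) (n - 1 - (j : ℕ)) (fun i => x ⟨i, by have := i.isLt; have := j.isLt; omega⟩)
        (fun i => x ⟨(j : ℕ) + 1 + (i : ℕ), by have := i.isLt; have := j.isLt; omega⟩)

lemma spliceMap_tmul {n : ℕ} (j : Fin n) (x : Fin n → C) (u v : C) :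
    spliceMap (k := k) j x (u ⊗ₜ[k] v) = tprod k (spliceFun j x u v) := by
  rw [spliceMap]
  simp only [LinearMap.comp_apply, LinearEquiv.coe_coe]
  rw [sandwich_tmul, tcast_tprod]
  congr 1
  funext i
  rw [spliceFun]
  simp only [Fin.coe_cast]
  split_ifs <;> first | rfl | omega | (exact congrArg x (Fin.ext (by simp; omega)))

lemma del_tprod {n : ℕ} (j : Fin n) (x : Fin n → C) :
    del D j (tprod k x) = spliceMap j x (D (x j)) := by
  rw [del, spliceMap]
  simp only [LinearMap.comp_apply, LinearEquiv.coe_coe]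
  rw [tcast_tprod, insertAt_tprod]
  congr 2
lemma mod_cases {p q : ℕ} (hq : 0 < q) (h : p < 2 * q) :
    p % q = if p < q then p else p - q := by
  have := hq
  split_ifs with h'
  · exact Nat.mod_eq_of_lt h'
  · rw [Nat.mod_eq_sub_mod (by omega), Nat.mod_eq_of_lt (by omega)]

lemma del_conj {m : ℕ} (j : Fin (m + 1)) :
    del (k := k) D j
      = (tauPow (m + 1 + 1) ((j : ℕ) : ℤ)).toLinearMap ∘ₗ
        del D (⟨0, Nat.succ_pos m⟩ : Fin (m + 1)) ∘ₗ
        (tauPow (m + 1) (-((j : ℕ) : ℤ))).toLinearMap := by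
  have hjv := j.isLt
  set r : ℕ := m + 1 - (j : ℕ) with hrdef
  have hτ : (tauPow (k := k) (C := C) (m + 1) (-((j : ℕ) : ℤ))) = tauPow (m + 1) ((r : ℕ) : ℤ) :=
    tauPow_congr ⟨-1, by omega⟩
  apply PiTensorProduct.ext; apply MultilinearMap.ext; intro x
  simp only [LinearMap.compMultilinearMap_apply, LinearMap.comp_apply, LinearEquiv.coe_coe]
  rw [hτ, tauPow_tprod]
  set y : Fin (m + 1) → C := fun i => x (i - (r : Fin (m + 1))) with hy
  rw [del_tprod, del_tprod]
  have hrv : ((r : Fin (m + 1)) : ℕ) = r % (m + 1) := Fin.val_natCast r (m + 1)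
  have hrm : ((j : ℕ) = 0 ∧ r % (m + 1) = 0) ∨ (0 < (j : ℕ) ∧ r % (m + 1) = r) := by
    rcases Nat.eq_zero_or_pos (j : ℕ) with h0 | h0
    · exact Or.inl ⟨h0, by rw [hrdef]; simp [h0]⟩
    · exact Or.inr ⟨h0, Nat.mod_eq_of_lt (by omega)⟩
  have hy0 : y ⟨0, Nat.succ_pos m⟩ = x j := by
    rw [hy]
    apply congrArg x
    rw [sub_eq_iff_eq_add]
    apply Fin.ext
    rw [Fin.val_add]
    simp only [Fin.val_mk, hrv]
    rcases hrm with ⟨h0, hq⟩ | ⟨h0, hq⟩ <;>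
      rw [hq, mod_cases (by omega) (by omega)] <;> split_ifs <;> omega
  rw [hy0]
  have hmap : spliceMap (k := k) j x
      = (tauPow (m + 1 + 1) ((j : ℕ) : ℤ)).toLinearMap ∘ₗ spliceMap ⟨0, Nat.succ_pos m⟩ y := by
    apply TensorProduct.ext'
    intro u v
    simp only [LinearMap.comp_apply, LinearEquiv.coe_coe]
    rw [spliceMap_tmul, spliceMap_tmul, tauPow_tprod]
    congr 1
    funext i
    have hiv := i.isLt
    have hjF : ((((j : ℕ) : ℕ) : Fin (m + 1 + 1)) : ℕ) = (j : ℕ) := by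
      rw [Fin.val_natCast]; exact Nat.mod_eq_of_lt (by omega)
    have hSv : ((i - (((j : ℕ) : ℕ) : Fin (m + 1 + 1))) : Fin (m + 1 + 1)).val
        = ((m + 2 - (j : ℕ)) + (i : ℕ)) % (m + 2) := by
      rw [Fin.sub_def]; simp only [Fin.val_mk, hjF]
    set S := i - (((j : ℕ) : ℕ) : Fin (m + 1 + 1)) with hSdef
    simp only [spliceFun]
    rcases Nat.lt_trichotomy (i : ℕ) (j : ℕ) with hc | hc | hc
    · -- i < j, so j ≥ 1
      have hsv : (S : ℕ) = (i : ℕ) + (m + 2) - (j : ℕ) := by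
        rw [hSv, mod_cases (by omega) (by omega)]
        split_ifs <;> omega
      rw [dif_pos (by omega), dif_neg (by omega), dif_neg (by omega), dif_neg (by omega)]
      rw [hy]
      apply congrArg x
      rw [eq_sub_iff_add_eq]
      apply Fin.ext
      rw [Fin.val_add]
      simp only [Fin.val_mk, hrv]
      rcases hrm with ⟨h0, hq⟩ | ⟨h0, hq⟩ <;>
        rw [hq, mod_cases (by omega) (by omega)] <;> split_ifs <;> omega
    · -- i = j
      have hsv : (S : ℕ) = 0 := by
        rw [hSv, mod_cases (by omega) (by omega)]
        split_ifs <;> omega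
      rw [dif_neg (by omega), dif_pos (by omega), dif_neg (by omega), dif_pos (by omega)]
    · -- i > j
      have hsv : (S : ℕ) = (i : ℕ) - (j : ℕ) := by
        rw [hSv, mod_cases (by omega) (by omega)]
        split_ifs <;> omega
      rcases Nat.eq_or_lt_of_le hc with hc2 | hc2
      · -- i = j + 1
        rw [dif_neg (by omega), dif_neg (by omega), dif_pos (by omega),
          dif_neg (by omega), dif_neg (by omega), dif_pos (by omega)]
      · -- i > j + 1
        rw [dif_neg (by omega), dif_neg (by omega), dif_neg (by omega),
          dif_neg (by omega), dif_neg (by omega), dif_neg (by omega)]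
        rw [hy]
        apply congrArg x
        rw [eq_sub_iff_add_eq]
        apply Fin.ext
        rw [Fin.val_add]
        simp only [Fin.val_mk, hrv]
        rcases hrm with ⟨h0, hq⟩ | ⟨h0, hq⟩ <;>
          rw [hq, mod_cases (by omega) (by omega)] <;> split_ifs <;> omega
  rw [hmap]
  rfl
def sgnz (a : ℤ) : k := (-1 : k) ^ a

lemma sgnz_natCast (a : ℕ) : ((-1 : k) ^ a) = sgnz (a : ℤ) := (zpow_natCast (-1 : k) a).symm

lemma sgnz_add (a b : ℤ) : sgnz (k := k) (a + b) = sgnz a * sgnz b :=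
  zpow_add₀ (by norm_num) a b

lemma sgnz_congr {a b : ℤ} (h : (2 : ℤ) ∣ (a - b)) : sgnz (k := k) a = sgnz b := by
  obtain ⟨t, ht⟩ := h
  have ha : a = b + 2 * t := by linarith
  rw [ha, sgnz_add]
  have : sgnz (k := k) (2 * t) = 1 := by
    rw [sgnz, zpow_mul]
    norm_num
  rw [this, mul_one]

lemma comp_sum' {ι : Type} [Fintype ι] {M N L : Type} [AddCommGroup M] [AddCommGroup N]
    [AddCommGroup L] [Module k M] [Module k N] [Module k L]
    (f : M →ₗ[k] N) (g : ι → (L →ₗ[k] M)) :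
    f ∘ₗ (∑ i, g i) = ∑ i, f ∘ₗ g i := by
  apply LinearMap.ext
  intro x
  simp [LinearMap.sum_apply, map_sum]

lemma double_sum_comp {ι κ : Type} [Fintype ι] [Fintype κ]
    {M N L : Type} [AddCommGroup M] [AddCommGroup N] [AddCommGroup L]
    [Module k M] [Module k N] [Module k L]
    (c : ι → k) (d : κ → k) (F : ι → (M →ₗ[k] N)) (G : κ → (L →ₗ[k] M)) :
    (∑ i, c i • F i) ∘ₗ (∑ j, d j • G j) = ∑ j, ∑ i, (d j * c i) • (F i ∘ₗ G j) := by
  apply LinearMap.ext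
  intro x
  simp only [LinearMap.comp_apply, LinearMap.sum_apply, LinearMap.smul_apply, map_sum, map_smul,
    Finset.smul_sum, smul_smul]

def Tmap (m : ℕ) (a b : ℤ) : tpow k C (m + 1) →ₗ[k] tpow k C (m + 1 + 1) :=
  (tauPow (m + 1 + 1) a).toLinearMap ∘ₗ del D (⟨0, Nat.succ_pos m⟩ : Fin (m + 1)) ∘ₗ
    (tauPow (m + 1) b).toLinearMap

lemma Tmap_congr {m : ℕ} {a a' b b' : ℤ} (ha : ((m : ℤ) + 2) ∣ (a - a'))
    (hb : ((m : ℤ) + 1) ∣ (b - b')) : Tmap (k := k) D m a b = Tmap D m a' b' := by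
  rw [Tmap, Tmap, tauPow_congr (n := m + 1 + 1) (by push_cast; exact_mod_cast ha),
    tauPow_congr (n := m + 1) (by exact_mod_cast hb)]

lemma tau_comp_Tmap {m : ℕ} (c a b : ℤ) :
    (tauPow (k := k) (C := C) (m + 1 + 1) c).toLinearMap ∘ₗ Tmap D m a b = Tmap D m (c + a) b := by
  rw [Tmap, Tmap, ← LinearMap.comp_assoc, tauPow_comp]

lemma Tmap_comp_tau {m : ℕ} (a b c : ℤ) :
    Tmap (k := k) D m a b ∘ₗ (tauPow (m + 1) c).toLinearMap = Tmap D m a (b + c) := by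
  rw [Tmap, Tmap, LinearMap.comp_assoc, LinearMap.comp_assoc, tauPow_comp]

lemma nat_mod_decomp (p q : ℕ) : ∃ t : ℤ, (p : ℤ) = ((p % q : ℕ) : ℤ) + (q : ℤ) * t := by
  refine ⟨((p / q : ℕ) : ℤ), ?_⟩
  have h := Nat.div_add_mod p q
  have h2 : (q : ℤ) * ((p / q : ℕ) : ℤ) + ((p % q : ℕ) : ℤ) = (p : ℤ) := by exact_mod_cast h
  linarith

def Common (m : ℕ) : tpow k C (m + 1) →ₗ[k] tpow k C (m + 1 + 1) :=
  ∑ i : Fin (m + 1 + 1), ∑ l : Fin (m + 1),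
    (sgnz (k := k) (((m : ℤ) + 1) * ((i : ℕ) : ℤ) + (m : ℤ) * ((l : ℕ) : ℤ))) •
      Tmap D m ((i : ℕ) : ℤ) ((l : ℕ) : ℤ)

lemma left_eq (m : ℕ) :
    Nop (m + 1 + 1) ∘ₗ dCB (k := k) D (m + 1) = Common D m := by
  obtain ⟨c, hc⟩ := Int.even_mul_succ_self ((m : ℤ))
  obtain ⟨c', hc'⟩ := Int.even_mul_succ_self ((m : ℤ) + 1)
  rw [Nop, dCB, double_sum_comp, Common]
  conv_rhs => rw [Finset.sum_comm]
  apply Fintype.sum_equiv (Equiv.neg (Fin (m + 1)))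
  intro j
  have hjv := j.isLt
  set B := (m + 1 - (j : ℕ) + 0) % (m + 1) with hB
  have hw : (((-j : Fin (m + 1))) : ℕ) = B := by
    rw [hB, ← zero_sub, Fin.coe_sub, Fin.val_zero]
  obtain ⟨s, hs⟩ : ∃ s : ℕ, m + 1 - (j : ℕ) + 0 = B + (m + 1) * s :=
    ⟨(m + 1 - (j : ℕ) + 0) / (m + 1), by
      rw [hB]; have := Nat.mod_add_div (m + 1 - (j : ℕ) + 0) (m + 1); linarith⟩
  have hsz : ((m : ℤ) + 1) - ((j : ℕ) : ℤ) = (B : ℤ) + ((m : ℤ) + 1) * (s : ℤ) := by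
    have h2 : ((m + 1 - (j : ℕ) + 0 : ℕ) : ℤ) = (B : ℤ) + ((m : ℤ) + 1) * (s : ℤ) := by
      exact_mod_cast hs
    have h3 : ((m + 1 - (j : ℕ) + 0 : ℕ) : ℤ) = (m : ℤ) + 1 - ((j : ℕ) : ℤ) := by
      push_cast [Nat.cast_sub (show (j : ℕ) ≤ m + 1 by omega)]; ring
    rw [h3] at h2
    linarith
  apply Fintype.sum_equiv (Equiv.addRight (((j : ℕ) : Fin (m + 1 + 1))))
  intro i
  have hiv := i.isLt
  rw [del_conj]
  have h1 : (tauPow (k := k) (C := C) (m + 1 + 1) ((i : ℕ) : ℤ)).toLinearMap ∘ₗ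
      ((tauPow (m + 1 + 1) ((j : ℕ) : ℤ)).toLinearMap ∘ₗ
        del D (⟨0, Nat.succ_pos m⟩ : Fin (m + 1)) ∘ₗ
        (tauPow (m + 1) (-((j : ℕ) : ℤ))).toLinearMap)
      = Tmap D m (((i : ℕ) : ℤ) + ((j : ℕ) : ℤ)) (-((j : ℕ) : ℤ)) :=
    tau_comp_Tmap D _ _ _
  rw [h1]
  have hjF : ((((j : ℕ) : ℕ) : Fin (m + 1 + 1)) : ℕ) = (j : ℕ) := by
    rw [Fin.val_natCast]; exact Nat.mod_eq_of_lt (by omega)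
  set A := ((i : ℕ) + (j : ℕ)) % (m + 2) with hA
  have hval : ((i + ((j : ℕ) : Fin (m + 1 + 1))) : Fin (m + 1 + 1)).val = A := by
    rw [hA, Fin.val_add, hjF]
  obtain ⟨t, ht⟩ : ∃ t : ℕ, (i : ℕ) + (j : ℕ) = A + (m + 2) * t :=
    ⟨((i : ℕ) + (j : ℕ)) / (m + 2), by
      rw [hA]; have := Nat.mod_add_div ((i : ℕ) + (j : ℕ)) (m + 2); linarith⟩
  have htz : ((i : ℕ) : ℤ) + ((j : ℕ) : ℤ) = (A : ℤ) + ((m : ℤ) + 2) * (t : ℤ) := by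
    have h2 : (((i : ℕ) + (j : ℕ) : ℕ) : ℤ) = (A : ℤ) + (((m + 2 : ℕ)) : ℤ) * (t : ℤ) := by
      exact_mod_cast ht
    push_cast at h2
    linarith
  simp only [Equiv.coe_addRight, Equiv.neg_apply, hval, hw]
  congr 1
  · rw [sgnz_natCast, sgnz_natCast, ← sgnz_add]
    apply sgnz_congr
    refine ⟨c' * (t : ℤ) + ((s : ℤ) - 1) * c, ?_⟩
    simp only [Nat.add_sub_cancel]
    push_cast
    linear_combination ((m : ℤ) + 1) * htz + (m : ℤ) * hsz + (t : ℤ) * hc' + ((s : ℤ) - 1) * hc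
  · apply Tmap_congr
    · exact ⟨(t : ℤ), by linarith [htz]⟩
    · exact ⟨(s : ℤ) - 1, by linear_combination hsz⟩

lemma right_eq (m : ℕ) :
    dCH (k := k) D (m + 1) ∘ₗ Nop (m + 1) = Common D m := by
  obtain ⟨c, hc⟩ := Int.even_mul_succ_self ((m : ℤ))
  rw [dCH, LinearMap.add_comp, LinearMap.smul_comp]
  have hdel0 : del0 (k := k) D (m + 1) = del D (⟨0, Nat.succ_pos m⟩ : Fin (m + 1)) := by
    rw [del0, dif_pos (Nat.succ_pos m)]
  have piece1 : dCB (k := k) D (m + 1) ∘ₗ Nop (m + 1)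
      = ∑ j : Fin (m + 1), ∑ l : Fin (m + 1),
          (sgnz (k := k) (((m : ℤ) + 1) * ((j : ℕ) : ℤ) + (m : ℤ) * ((l : ℕ) : ℤ))) •
            Tmap D m ((j : ℕ) : ℤ) ((l : ℕ) : ℤ) := by
    obtain ⟨c, hc⟩ := Int.even_mul_succ_self ((m : ℤ))
    rw [dCB, Nop, double_sum_comp, Finset.sum_comm]
    refine Finset.sum_congr rfl fun j _ => ?_
    have hjv := j.isLt
    apply Fintype.sum_equiv (Equiv.subRight (((j : ℕ) : Fin (m + 1))))
    intro l
    have hlv := l.isLt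
    rw [del_conj]
    have h1 : ((tauPow (k := k) (m + 1 + 1) ((j : ℕ) : ℤ)).toLinearMap ∘ₗ
        del D (⟨0, Nat.succ_pos m⟩ : Fin (m + 1)) ∘ₗ
        (tauPow (m + 1) (-((j : ℕ) : ℤ))).toLinearMap) ∘ₗ
          (tauPow (m + 1) ((l : ℕ) : ℤ)).toLinearMap
        = Tmap D m ((j : ℕ) : ℤ) (-((j : ℕ) : ℤ) + ((l : ℕ) : ℤ)) :=
      Tmap_comp_tau D _ _ _
    rw [h1]
    have hjF : ((((j : ℕ) : ℕ) : Fin (m + 1)) : ℕ) = (j : ℕ) := by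
      rw [Fin.val_natCast]; exact Nat.mod_eq_of_lt (by omega)
    set A := ((m + 1 - (j : ℕ)) + (l : ℕ)) % (m + 1) with hA
    have hval : ((l - ((j : ℕ) : Fin (m + 1))) : Fin (m + 1)).val = A := by
      rw [hA, Fin.coe_sub, hjF]
    obtain ⟨t, ht⟩ : ∃ t : ℕ, (m + 1 - (j : ℕ)) + (l : ℕ) = A + (m + 1) * t :=
      ⟨((m + 1 - (j : ℕ)) + (l : ℕ)) / (m + 1), by
        rw [hA]; have := Nat.mod_add_div ((m + 1 - (j : ℕ)) + (l : ℕ)) (m + 1); linarith⟩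
    have htz : ((m : ℤ) + 1) - ((j : ℕ) : ℤ) + ((l : ℕ) : ℤ)
        = (A : ℤ) + ((m : ℤ) + 1) * (t : ℤ) := by
      have h2 : (((m + 1 - (j : ℕ)) + (l : ℕ) : ℕ) : ℤ) = (A : ℤ) + ((m : ℤ) + 1) * (t : ℤ) := by
        exact_mod_cast ht
      have h3 : (((m + 1 - (j : ℕ)) + (l : ℕ) : ℕ) : ℤ)
          = (m : ℤ) + 1 - ((j : ℕ) : ℤ) + ((l : ℕ) : ℤ) := by
        push_cast [Nat.cast_sub (show (j : ℕ) ≤ m + 1 by omega)]; ring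
      rw [h3] at h2
      linarith
    simp only [Equiv.subRight_apply, hval]
    congr 1
    · rw [sgnz_natCast, sgnz_natCast, ← sgnz_add]
      apply sgnz_congr
      refine ⟨c * ((t : ℤ) - 1), ?_⟩
      simp only [Nat.add_sub_cancel]
      push_cast
      linear_combination (m : ℤ) * htz + ((t : ℤ) - 1) * hc
    · apply Tmap_congr
      · exact ⟨0, by ring⟩
      · exact ⟨(t : ℤ) - 1, by linear_combination htz⟩
  have piece2 : ((-1 : k) ^ (m + 1)) •
        (((tauPow (m + 1 + 1) (-1)).toLinearMap ∘ₗ del0 D (m + 1)) ∘ₗ Nop (m + 1))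
      = ∑ l : Fin (m + 1),
          (sgnz (k := k) (((m : ℤ) + 1) * ((m : ℤ) + 1) + (m : ℤ) * ((l : ℕ) : ℤ))) •
            Tmap D m ((m : ℤ) + 1) ((l : ℕ) : ℤ) := by
    rw [hdel0, Nop, comp_sum']
    rw [Finset.smul_sum]
    refine Finset.sum_congr rfl fun l _ => ?_
    have hlv := l.isLt
    rw [LinearMap.comp_smul, smul_smul]
    have h1 : ((tauPow (k := k) (m + 1 + 1) (-1)).toLinearMap ∘ₗ
        del D (⟨0, Nat.succ_pos m⟩ : Fin (m + 1))) ∘ₗ (tauPow (m + 1) ((l : ℕ) : ℤ)).toLinearMap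
        = Tmap D m (-1) ((l : ℕ) : ℤ) := by
      rw [Tmap, LinearMap.comp_assoc]
    rw [h1]
    congr 1
    · rw [sgnz_natCast, sgnz_natCast, ← sgnz_add]
      apply sgnz_congr
      refine ⟨-c, ?_⟩
      simp only [Nat.add_sub_cancel]
      push_cast
      linear_combination -hc
    · apply Tmap_congr
      · exact ⟨-1, by ring⟩
      · exact ⟨0, by ring⟩
  rw [piece1, piece2, Common]
  conv_rhs => rw [Fin.sum_univ_castSucc]
  congr 1
end

theorem statement (k : Type) [Field k] [CharZero k]
    (C : Type) [AddCommGroup C] [Module k C]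
    (Δ : C →ₗ[k] C ⊗[k] C) (η : C →ₗ[k] k)
    (hcoassoc : (TensorProduct.assoc k C C C).toLinearMap ∘ₗ
        (TensorProduct.map Δ LinearMap.id) ∘ₗ Δ
      = (TensorProduct.map LinearMap.id Δ) ∘ₗ Δ)
    (hcounitL : (TensorProduct.lid k C).toLinearMap ∘ₗ
        (TensorProduct.map η LinearMap.id) ∘ₗ Δ = LinearMap.id)
    (hcounitR : (TensorProduct.rid k C).toLinearMap ∘ₗ
        (TensorProduct.map LinearMap.id η) ∘ₗ Δ = LinearMap.id) :
    ∀ n : ℕ, 1 ≤ n → Nop (n + 1) ∘ₗ dCB Δ n = dCH Δ n ∘ₗ Nop n := by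
  intro n hn
  obtain ⟨m, rfl⟩ : ∃ m, n = m + 1 := ⟨n - 1, by omega⟩
  rw [left_eq Δ m, right_eq Δ m]
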